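/- Let n ≥ 1, N ∈ ℕ₀^n, α ∈ ℕ₀^n, and θ = (θ_1,…,θ_n) ∈ ℂ^n with θ_j + ⋯ + θ_n ≠ 0 for all j = 1,…,n. Set δ = (1/2) min{(1+|θ_j|)^{−1}, |θ_j+⋯+θ_n|^{−1} : j = 1,…,n} and U_δ = {t ∈ ℂ : |t| < δ}, and let q = |K(N,α)|, q' = |L(N,α)|. Then the function G_{N,α,θ}, a priori defined on U_δ \ {0}, extends to an analytic function on U_δ, and there is a constant C > 0 depending only on N and θ (not on α) such that |G_{N,α,θ}(t)| ≤ C |t|^{q'−q} for all t ∈ U_δ. -/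

import Mathlib

/-- Generalized binomial coefficient `binom(z, m) = z(z−1)⋯(z−m+1)/m!`. -/
noncomputable def cbinom (z : ℂ) (m : ℕ) : ℂ :=
  (∏ k ∈ Finset.range m, (z - (k : ℂ))) / (m.factorial : ℂ)

/-- The set `K(N,α)` of the paper (the paper's `n` is `n + 1` here; index `j : Fin (n+1)`
corresponds to the paper's `j+1`, so the paper's `n + 1 - j` is `n + 1 - j.val`). -/
def Kset (n : ℕ) (N α : Fin (n + 1) → ℕ) : Finset (Fin (n + 1)) :=
  Finset.univ.filter fun j =>
    (n + 1 - j.val) + ∑ i ∈ Finset.Ici j, N i = ∑ i ∈ Finset.Ici j, α i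

/-- The set `L(N,α)` of the paper. -/
def Lset (n : ℕ) (N α : Fin (n + 1) → ℕ) : Finset (Fin (n + 1)) :=
  Finset.univ.filter fun j => N j + 1 ≤ α j

/-- `δ = (1/2) min_j { (1+|θ_j|)⁻¹, |θ_j+⋯+θ_n|⁻¹ }`. -/
noncomputable def deltaOf (n : ℕ) (θ : Fin (n + 1) → ℂ) : ℝ :=
  (1 / 2) *
    Finset.univ.inf' Finset.univ_nonempty fun j : Fin (n + 1) =>
      min (1 + ‖θ j‖)⁻¹ (‖∑ i ∈ Finset.Ici j, θ i‖)⁻¹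

/-- The function `G_{N,α,θ}` of the paper, defined a priori away from `t = 0`. -/
noncomputable def Gfun (n : ℕ) (N α : Fin (n + 1) → ℕ) (θ : Fin (n + 1) → ℂ) (t : ℂ) : ℂ :=
  (∏ j, cbinom ((N j : ℂ) - t * θ j) (α j)) /
    ∏ j : Fin (n + 1),
      (t - ((∑ i ∈ Finset.Ici j, (N i : ℂ)) + ((n : ℂ) + 1 - (j.val : ℂ)) -
            ∑ i ∈ Finset.Ici j, (α i : ℂ)) / ∑ i ∈ Finset.Ici j, θ i)

/- ====== auxiliary lemmas ====== -/

lemma prod_abs_le_aux (N : ℕ) : ∀ a : ℕ,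
    ∏ k ∈ Finset.range a, (|(N:ℝ) - k| + 1) ≤ (N+1:ℝ)^(min a (N+1)) * a.factorial := by
  intro a
  induction a with
  | zero => simp
  | succ a ih =>
    have hfacpos : (0:ℝ) < a.factorial := by exact_mod_cast a.factorial_pos
    have hfac1 : (a.factorial:ℝ) ≤ (a+1) * a.factorial := by nlinarith
    rw [Finset.prod_range_succ, Nat.factorial_succ]
    push_cast
    rcases le_or_gt (a+1) (N+1) with h | h
    · have hle : |(N:ℝ) - a| + 1 ≤ (N+1:ℝ) := by
        have : (a:ℝ) ≤ N := by exact_mod_cast Nat.lt_succ_iff.mp h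
        rw [abs_of_nonneg (by linarith)]; linarith
      have hmin : min (a+1) (N+1) = a + 1 := min_eq_left h
      have hmin' : min a (N+1) = a := min_eq_left (by omega)
      rw [hmin]; rw [hmin'] at ih
      calc (∏ k ∈ Finset.range a, (|(N:ℝ) - k| + 1)) * (|(N:ℝ) - a| + 1)
          ≤ ((N+1:ℝ)^a * a.factorial) * (N+1:ℝ) :=
            mul_le_mul ih hle (by positivity) (by positivity)
        _ = (N+1:ℝ)^(a+1) * a.factorial := by rw [pow_succ]; ring
        _ ≤ (N+1:ℝ)^(a+1) * ((a+1) * a.factorial) :=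
            mul_le_mul_of_nonneg_left hfac1 (by positivity)
    · have hN : (N:ℝ) ≤ a := by
        have : N ≤ a := by omega
        exact_mod_cast this
      have hle : |(N:ℝ) - a| + 1 ≤ (a+1:ℝ) := by
        rw [abs_of_nonpos (by linarith)]
        have : (0:ℝ) ≤ N := Nat.cast_nonneg N; linarith
      have hmin : min (a+1) (N+1) = N+1 := min_eq_right (le_of_lt h)
      have hmin' : min a (N+1) = N+1 := min_eq_right (by omega)
      rw [hmin]; rw [hmin'] at ih
      calc (∏ k ∈ Finset.range a, (|(N:ℝ) - k| + 1)) * (|(N:ℝ) - a| + 1)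
          ≤ ((N+1:ℝ)^(N+1) * a.factorial) * (a+1:ℝ) :=
            mul_le_mul ih hle (by positivity) (by positivity)
        _ = (N+1:ℝ)^(N+1) * ((a+1) * a.factorial) := by ring

lemma prod_abs_le (N a : ℕ) :
    ∏ k ∈ Finset.range a, (|(N:ℝ) - k| + 1) ≤ (N+1:ℝ)^(N+1) * a.factorial := by
  refine le_trans (prod_abs_le_aux N a) ?_
  have h1 : (1:ℝ) ≤ N+1 := by have : (0:ℝ) ≤ N := Nat.cast_nonneg N; linarith
  have := pow_le_pow_right₀ h1 (min_le_right a (N+1))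
  have hfacpos : (0:ℝ) ≤ a.factorial := by positivity
  exact mul_le_mul_of_nonneg_right this hfacpos

lemma Kset_exists_L {n : ℕ} {N α : Fin (n + 1) → ℕ} {j : Fin (n+1)}
    (hj : j ∈ Kset n N α) : ((Lset n N α) ∩ Finset.Ici j).Nonempty := by
  rw [Kset, Finset.mem_filter] at hj
  by_contra hemp
  rw [Finset.not_nonempty_iff_eq_empty, Finset.eq_empty_iff_forall_notMem] at hemp
  have hle : ∀ i ∈ Finset.Ici j, α i ≤ N i := by
    intro i hi
    by_contra hlt
    exact hemp i (Finset.mem_inter.mpr ⟨Finset.mem_filter.mpr ⟨Finset.mem_univ _, by omega⟩, hi⟩)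
  have hsum : ∑ i ∈ Finset.Ici j, α i ≤ ∑ i ∈ Finset.Ici j, N i :=
    Finset.sum_le_sum hle
  have hjv : j.val ≤ n := Nat.lt_succ_iff.mp j.isLt
  omega

lemma card_K_le_L (n : ℕ) (N α : Fin (n + 1) → ℕ) :
    (Kset n N α).card ≤ (Lset n N α).card := by
  classical
  have hf : ∀ j ∈ Kset n N α, ((Lset n N α) ∩ Finset.Ici j).Nonempty := fun j hj =>
    Kset_exists_L hj
  set f : Fin (n+1) → Fin (n+1) := fun j =>
    if h : ((Lset n N α) ∩ Finset.Ici j).Nonempty then ((Lset n N α) ∩ Finset.Ici j).min' h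
    else j with hfdef
  apply Finset.card_le_card_of_injOn f
  · intro j hj
    have h := hf j hj
    have := Finset.min'_mem _ h
    simp only [hfdef, dif_pos h]
    exact (Finset.mem_inter.mp this).1
  · have key : ∀ j1 j2 : Fin (n+1), j1 ∈ Kset n N α → j2 ∈ Kset n N α →
        j1 < j2 → f j1 ≠ f j2 := by
      intro j1 j2 h1 h2 hlt heq
      have hne1 := hf j1 h1
      have hne2 := hf j2 h2
      simp only [hfdef, dif_pos hne1, dif_pos hne2] at heq
      have hi2 : j2 ≤ ((Lset n N α) ∩ Finset.Ici j2).min' hne2 := by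
        have := Finset.min'_mem _ hne2
        exact Finset.mem_Ici.mp (Finset.mem_inter.mp this).2
      have hnoL : ∀ i ∈ Finset.Ico j1 j2, α i ≤ N i := by
        intro i hi
        rw [Finset.mem_Ico] at hi
        by_contra hcon
        have hiL : i ∈ (Lset n N α) ∩ Finset.Ici j1 :=
          Finset.mem_inter.mpr ⟨Finset.mem_filter.mpr ⟨Finset.mem_univ _, by omega⟩,
            Finset.mem_Ici.mpr hi.1⟩
        have := Finset.min'_le _ _ hiL
        rw [heq] at this
        exact absurd (lt_of_lt_of_le hi.2 hi2) (not_lt.mpr this)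
      have hsplit : Finset.Ico j1 j2 ∪ Finset.Ici j2 = Finset.Ici j1 := by
        ext i
        simp only [Finset.mem_union, Finset.mem_Ico, Finset.mem_Ici, Fin.le_def, Fin.lt_def]
        have := hlt
        rw [Fin.lt_def] at this
        omega
      have hdisj : Disjoint (Finset.Ico j1 j2) (Finset.Ici j2) := by
        rw [Finset.disjoint_left]
        intro a ha hb
        rw [Finset.mem_Ico] at ha
        rw [Finset.mem_Ici] at hb
        exact absurd hb (not_le.mpr ha.2)
      have hsumN : ∑ i ∈ Finset.Ici j1, N i
          = ∑ i ∈ Finset.Ico j1 j2, N i + ∑ i ∈ Finset.Ici j2, N i := by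
        rw [← hsplit, Finset.sum_union hdisj]
      have hsumα : ∑ i ∈ Finset.Ici j1, α i
          = ∑ i ∈ Finset.Ico j1 j2, α i + ∑ i ∈ Finset.Ici j2, α i := by
        rw [← hsplit, Finset.sum_union hdisj]
      rw [Kset, Finset.mem_filter] at h1 h2
      have hK1 := h1.2
      have hK2 := h2.2
      have hsumle : ∑ i ∈ Finset.Ico j1 j2, α i ≤ ∑ i ∈ Finset.Ico j1 j2, N i :=
        Finset.sum_le_sum hnoL
      have hj1v : j1.val < j2.val := hlt
      have hj2v : j2.val ≤ n := Nat.lt_succ_iff.mp j2.isLt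
      omega
    intro j1 h1 j2 h2 heq
    by_contra hne
    rcases lt_or_gt_of_ne hne with h | h
    · exact key j1 j2 h1 h2 h heq
    · exact key j2 j1 h2 h1 h heq.symm

lemma diff_finset_prod {ι : Type*} (s : Finset ι) (f : ι → ℂ → ℂ)
    (hf : ∀ i ∈ s, Differentiable ℂ (f i)) :
    Differentiable ℂ (fun t => ∏ i ∈ s, f i t) := by
  classical
  induction s using Finset.induction with
  | empty => simpa using differentiable_const (1:ℂ)
  | @insert a s ha ih =>
    simp only [Finset.prod_insert ha]
    exact (hf a (Finset.mem_insert_self a s)).mul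
      (ih fun i hi => hf i (Finset.mem_insert_of_mem hi))

/-- `G_{N,α,θ}` extends analytically to the disk `U_δ`, and there is a constant
`C > 0` depending only on `N` and `θ` (not on `α`) with `|G(t)| ≤ C |t|^(q'−q)` on `U_δ`,
where `q = |K(N,α)|`, `q' = |L(N,α)|`. -/
theorem stmt3 (n : ℕ) (N : Fin (n + 1) → ℕ) (θ : Fin (n + 1) → ℂ)
    (hθ : ∀ j : Fin (n + 1), ∑ i ∈ Finset.Ici j, θ i ≠ 0) :
    ∃ C > (0 : ℝ), ∀ α : Fin (n + 1) → ℕ,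
      ∃ G : ℂ → ℂ,
        DifferentiableOn ℂ G (Metric.ball 0 (deltaOf n θ)) ∧
        (∀ t ∈ Metric.ball (0 : ℂ) (deltaOf n θ), t ≠ 0 → G t = Gfun n N α θ t) ∧
        ∀ t ∈ Metric.ball (0 : ℂ) (deltaOf n θ),
          ‖G t‖ ≤
            C * ‖t‖ ^ (((Lset n N α).card : ℝ) - ((Kset n N α).card : ℝ)) := by
  classical
  set δ := deltaOf n θ with hδdef
  have hθabs : ∀ j : Fin (n+1), 0 < ‖∑ i ∈ Finset.Ici j, θ i‖ := fun j =>
    norm_pos_iff.mpr (hθ j)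
  have hδpos : 0 < δ := by
    rw [hδdef, deltaOf]
    have hpt : ∀ j : Fin (n+1), 0 < min (1 + ‖θ j‖)⁻¹
        (‖∑ i ∈ Finset.Ici j, θ i‖)⁻¹ := by
      intro j
      apply lt_min
      · have := norm_nonneg (θ j); positivity
      · exact inv_pos.mpr (hθabs j)
    have h2 : (0:ℝ) < Finset.univ.inf' Finset.univ_nonempty fun j : Fin (n + 1) =>
        min (1 + ‖θ j‖)⁻¹ (‖∑ i ∈ Finset.Ici j, θ i‖)⁻¹ :=
      (Finset.lt_inf'_iff _).mpr fun j _ => hpt j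
    linarith
  have hδ1 : ∀ j : Fin (n+1), δ ≤ (1/2) * (1 + ‖θ j‖)⁻¹ := by
    intro j
    rw [hδdef, deltaOf]
    have h := Finset.inf'_le (b := j)
      (fun j : Fin (n+1) => min (1 + ‖θ j‖)⁻¹
        (‖∑ i ∈ Finset.Ici j, θ i‖)⁻¹) (Finset.mem_univ j)
    have := min_le_left (1 + ‖θ j‖)⁻¹ (‖∑ i ∈ Finset.Ici j, θ i‖)⁻¹
    linarith
  have hδ2 : ∀ j : Fin (n+1), δ ≤ (1/2) * (‖∑ i ∈ Finset.Ici j, θ i‖)⁻¹ := by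
    intro j
    rw [hδdef, deltaOf]
    have h := Finset.inf'_le (b := j)
      (fun j : Fin (n+1) => min (1 + ‖θ j‖)⁻¹
        (‖∑ i ∈ Finset.Ici j, θ i‖)⁻¹) (Finset.mem_univ j)
    have := min_le_right (1 + ‖θ j‖)⁻¹ (‖∑ i ∈ Finset.Ici j, θ i‖)⁻¹
    linarith
  have hδhalf : δ ≤ 1/2 := by
    have h := hδ1 ⟨0, Nat.succ_pos n⟩
    have h2 : (1 + ‖θ ⟨0, Nat.succ_pos n⟩‖)⁻¹ ≤ 1 := by
      rw [inv_le_one_iff₀]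
      right
      linarith [norm_nonneg (θ ⟨0, Nat.succ_pos n⟩)]
    linarith
  set Cnum : ℝ := ∏ j : Fin (n+1), ((1 + ‖θ j‖) * ((N j : ℝ)+1)^(N j + 1))
    with hCnumdef
  have hCnumpos : 0 < Cnum := by
    rw [hCnumdef]
    apply Finset.prod_pos
    intro j _
    have h1 := norm_nonneg (θ j)
    have h2 : (0:ℝ) ≤ N j := Nat.cast_nonneg _
    positivity
  refine ⟨Cnum / δ^(n+1), by positivity, ?_⟩
  intro α
  set q := (Kset n N α).card with hq
  set q' := (Lset n N α).card with hq'
  have hqle : q ≤ q' := card_K_le_L n N α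
  set m := q' - q with hm
  set c : Fin (n+1) → ℂ := fun j =>
    ((∑ i ∈ Finset.Ici j, (N i : ℂ)) + ((n : ℂ) + 1 - (j.val : ℂ)) -
      ∑ i ∈ Finset.Ici j, (α i : ℂ)) / ∑ i ∈ Finset.Ici j, θ i with hcdef
  have hGfun : ∀ t : ℂ, Gfun n N α θ t =
      (∏ j, cbinom ((N j : ℂ) - t * θ j) (α j)) / ∏ j, (t - c j) := fun t => rfl
  have hczero : ∀ j : Fin (n+1), c j = 0 ↔ j ∈ Kset n N α := by
    intro j
    have hjn : j.val ≤ n := Nat.lt_succ_iff.mp j.isLt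
    have hMcast : (∑ i ∈ Finset.Ici j, (N i : ℂ)) + ((n : ℂ) + 1 - (j.val : ℂ)) -
        ∑ i ∈ Finset.Ici j, (α i : ℂ)
        = ((((n + 1 - j.val) + ∑ i ∈ Finset.Ici j, N i : ℕ) : ℂ)) -
          (((∑ i ∈ Finset.Ici j, α i : ℕ)) : ℂ) := by
      push_cast [Nat.cast_sub (by omega : j.val ≤ n + 1)]
      ring
    rw [hcdef]
    simp only
    rw [div_eq_zero_iff]
    constructor
    · rintro (h | h)
      · rw [hMcast, sub_eq_zero] at h
        exact Finset.mem_filter.mpr ⟨Finset.mem_univ _, by exact_mod_cast h⟩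
      · exact absurd h (hθ j)
    · intro h
      left
      rw [hMcast, sub_eq_zero]
      have := (Finset.mem_filter.mp h).2
      exact_mod_cast this
  have hcbig : ∀ j : Fin (n+1), j ∉ Kset n N α → 2*δ ≤ ‖c j‖ := by
    intro j hj
    have hjn : j.val ≤ n := Nat.lt_succ_iff.mp j.isLt
    set M : ℂ := (∑ i ∈ Finset.Ici j, (N i : ℂ)) + ((n : ℂ) + 1 - (j.val : ℂ)) -
        ∑ i ∈ Finset.Ici j, (α i : ℂ) with hMdef
    have hMint : M = (((((n + 1 - j.val) + ∑ i ∈ Finset.Ici j, N i : ℕ) : ℤ) -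
        ((∑ i ∈ Finset.Ici j, α i : ℕ) : ℤ) : ℤ) : ℂ) := by
      rw [hMdef]
      push_cast [Nat.cast_sub (by omega : j.val ≤ n + 1)]
      ring
    have hMne : ((((n + 1 - j.val) + ∑ i ∈ Finset.Ici j, N i : ℕ) : ℤ) -
        ((∑ i ∈ Finset.Ici j, α i : ℕ) : ℤ)) ≠ 0 := by
      intro h
      apply hj
      refine Finset.mem_filter.mpr ⟨Finset.mem_univ _, ?_⟩
      omega
    have hM1 : (1:ℝ) ≤ ‖M‖ := by
      rw [hMint, Complex.norm_intCast]
      exact_mod_cast Int.one_le_abs hMne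
    have hcj : c j = M / ∑ i ∈ Finset.Ici j, θ i := rfl
    rw [hcj, norm_div]
    have hS := hθabs j
    have h2 : 2*δ ≤ (‖∑ i ∈ Finset.Ici j, θ i‖)⁻¹ := by
      have := hδ2 j; linarith
    calc 2*δ ≤ (‖∑ i ∈ Finset.Ici j, θ i‖)⁻¹ := h2
      _ = 1 / ‖∑ i ∈ Finset.Ici j, θ i‖ := by rw [one_div]
      _ ≤ ‖M‖ / ‖∑ i ∈ Finset.Ici j, θ i‖ := by gcongr
  have hball : ∀ t ∈ Metric.ball (0:ℂ) δ, ‖t‖ < δ := by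
    intro t ht
    rwa [Metric.mem_ball, dist_zero_right] at ht
  have hdist : ∀ t ∈ Metric.ball (0:ℂ) δ, ∀ j ∉ Kset n N α,
      δ ≤ ‖t - c j‖ := by
    intro t ht j hj
    have h1 := hcbig j hj
    have h2 := hball t ht
    have h3 : ‖c j‖ ≤ ‖c j - t‖ + ‖t‖ := by
      calc ‖c j‖ = ‖(c j - t) + t‖ := by ring_nf
        _ ≤ _ := norm_add_le _ _
    have h4 : ‖c j - t‖ = ‖t - c j‖ := by
      rw [← norm_neg (c j - t)]
      ring_nf
    linarith
  set D : ℂ → ℂ := fun t => ∏ j ∈ (Kset n N α)ᶜ, (t - c j) with hDdef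
  have hDabs : ∀ t : ℂ, ‖D t‖ = ∏ j ∈ (Kset n N α)ᶜ, ‖t - c j‖ := by
    intro t
    rw [hDdef]
    exact norm_prod _ _
  have hDlow : ∀ t ∈ Metric.ball (0:ℂ) δ, δ^(n+1) ≤ ‖D t‖ := by
    intro t ht
    rw [hDabs]
    calc δ^(n+1) ≤ δ^((Kset n N α)ᶜ.card) := by
          apply pow_le_pow_of_le_one (le_of_lt hδpos) (by linarith)
          rw [Finset.card_compl, Fintype.card_fin]
          omega
      _ = ∏ _j ∈ (Kset n N α)ᶜ, δ := by rw [Finset.prod_const, Finset.card_compl, Fintype.card_fin]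
      _ ≤ ∏ j ∈ (Kset n N α)ᶜ, ‖t - c j‖ :=
          Finset.prod_le_prod (fun j _ => le_of_lt hδpos)
            (fun j hj => hdist t ht j (Finset.mem_compl.mp hj))
  have hDne : ∀ t ∈ Metric.ball (0:ℂ) δ, D t ≠ 0 := by
    intro t ht h0
    have h1 := hDlow t ht
    rw [h0, norm_zero] at h1
    have h2 := pow_pos hδpos (n+1)
    linarith
  have hden : ∀ t : ℂ, (∏ j, (t - c j)) = t^q * D t := by
    intro t
    rw [← Finset.prod_mul_prod_compl (Kset n N α) (fun j => t - c j)]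
    congr 1
    calc ∏ j ∈ Kset n N α, (t - c j) = ∏ _j ∈ Kset n N α, t := by
          apply Finset.prod_congr rfl
          intro j hj
          rw [(hczero j).mpr hj, sub_zero]
      _ = t^q := by rw [Finset.prod_const, hq]
  set Q : Fin (n+1) → ℂ → ℂ := fun j t =>
    (if j ∈ Lset n N α then -θ j else 1) *
      ((∏ k ∈ (if j ∈ Lset n N α then (Finset.range (α j)).erase (N j)
          else Finset.range (α j)), ((N j : ℂ) - t * θ j - (k:ℂ))) /
        ((α j).factorial : ℂ)) with hQdef
  have hQ : ∀ (j : Fin (n+1)) (t : ℂ), cbinom ((N j : ℂ) - t * θ j) (α j)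
      = (if j ∈ Lset n N α then t else 1) * Q j t := by
    intro j t
    by_cases hL : j ∈ Lset n N α
    · have hmem : N j ∈ Finset.range (α j) := by
        rw [Finset.mem_range]
        have := (Finset.mem_filter.mp hL).2
        omega
      simp only [hQdef, if_pos hL, cbinom]
      rw [← Finset.mul_prod_erase _ _ hmem]
      ring
    · simp only [hQdef, if_neg hL, cbinom, one_mul]
  have hnum : ∀ t : ℂ, (∏ j, cbinom ((N j : ℂ) - t * θ j) (α j)) = t^q' * ∏ j, Q j t := by
    intro t
    calc (∏ j, cbinom ((N j : ℂ) - t * θ j) (α j))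
        = ∏ j, ((if j ∈ Lset n N α then t else 1) * Q j t) :=
          Finset.prod_congr rfl fun j _ => hQ j t
      _ = (∏ j, (if j ∈ Lset n N α then t else 1)) * ∏ j, Q j t := Finset.prod_mul_distrib
      _ = t^q' * ∏ j, Q j t := by
          congr 1
          rw [Finset.prod_ite_mem, Finset.univ_inter, Finset.prod_const, hq']
  have hQbound : ∀ t ∈ Metric.ball (0:ℂ) δ, ∀ j : Fin (n+1),
      ‖Q j t‖ ≤ (1 + ‖θ j‖) * ((N j : ℝ)+1)^(N j + 1) := by
    intro t ht j
    have hfacpos : (0:ℝ) < (α j).factorial := by exact_mod_cast (α j).factorial_pos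
    have htθ : ‖t * θ j‖ ≤ 1 := by
      rw [norm_mul]
      have h1 := le_of_lt (hball t ht)
      have h2 := hδ1 j
      have h3 : (0:ℝ) < 1 + ‖θ j‖ := by
        have := norm_nonneg (θ j); linarith
      have h4 : ‖θ j‖ ≤ 1 + ‖θ j‖ := by linarith
      have h5 : (1 + ‖θ j‖)⁻¹ * (1 + ‖θ j‖) = 1 :=
        inv_mul_cancel₀ (ne_of_gt h3)
      nlinarith [norm_nonneg t, norm_nonneg (θ j)]
    have hfactor : ∀ k : ℕ, ‖(N j : ℂ) - t * θ j - (k:ℂ)‖ ≤ |(N j : ℝ) - k| + 1 := by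
      intro k
      have heq : (N j : ℂ) - t * θ j - (k:ℂ) = (((N j : ℝ) - k : ℝ) : ℂ) - t * θ j := by
        push_cast; ring
      rw [heq]
      calc ‖(((N j : ℝ) - k : ℝ) : ℂ) - t * θ j‖
          ≤ ‖(((N j : ℝ) - k : ℝ) : ℂ)‖ + ‖t * θ j‖ := by
            exact norm_sub_le ((((N j : ℝ) - k : ℝ) : ℂ)) (t * θ j)
        _ ≤ |(N j : ℝ) - k| + 1 := by
            rw [Complex.norm_real, Real.norm_eq_abs]
            linarith
    set s := (if j ∈ Lset n N α then (Finset.range (α j)).erase (N j)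
      else Finset.range (α j)) with hs
    have hssub : s ⊆ Finset.range (α j) := by
      rw [hs]
      by_cases hL : j ∈ Lset n N α
      · rw [if_pos hL]; exact Finset.erase_subset _ _
      · rw [if_neg hL]
    have hprod : ‖∏ k ∈ s, ((N j : ℂ) - t * θ j - (k:ℂ))‖
        ≤ ((N j : ℝ)+1)^(N j + 1) * (α j).factorial := by
      rw [norm_prod]
      calc ∏ k ∈ s, ‖(N j : ℂ) - t * θ j - (k:ℂ)‖
          ≤ ∏ k ∈ s, (|(N j : ℝ) - k| + 1) :=
            Finset.prod_le_prod (fun k _ => norm_nonneg _) (fun k _ => hfactor k)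
        _ ≤ ∏ k ∈ Finset.range (α j), (|(N j : ℝ) - k| + 1) := by
            rw [← Finset.prod_sdiff hssub]
            have h1le : (1:ℝ) ≤ ∏ k ∈ Finset.range (α j) \ s, (|(N j:ℝ) - k| + 1) := by
              have := Finset.prod_le_prod (s := Finset.range (α j) \ s)
                (f := fun _ => (1:ℝ)) (g := fun k => |(N j:ℝ) - (k:ℕ)| + 1)
                (by intros; norm_num)
                (by intro k _; simp)
              simpa using this
            exact le_mul_of_one_le_left
              (Finset.prod_nonneg (fun k _ => by have := abs_nonneg ((N j:ℝ) - (k:ℕ)); linarith))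
              h1le
        _ ≤ _ := prod_abs_le (N j) (α j)
    have habs_ite : ‖if j ∈ Lset n N α then -θ j else 1‖
        ≤ 1 + ‖θ j‖ := by
      by_cases hL : j ∈ Lset n N α
      · rw [if_pos hL, norm_neg]
        linarith
      · rw [if_neg hL, norm_one]
        linarith [norm_nonneg (θ j)]
    simp only [hQdef]
    rw [← hs, norm_mul, norm_div, Complex.norm_natCast]
    have hb1 : ‖∏ k ∈ s, ((N j : ℂ) - t * θ j - (k:ℂ))‖ / ((α j).factorial:ℝ)
        ≤ ((N j:ℝ)+1)^(N j+1) := by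
      rw [div_le_iff₀ hfacpos]
      exact hprod
    apply mul_le_mul habs_ite hb1 (by positivity) (by positivity)
  have hAbound : ∀ t ∈ Metric.ball (0:ℂ) δ, ‖∏ j, Q j t‖ ≤ Cnum := by
    intro t ht
    rw [norm_prod, hCnumdef]
    exact Finset.prod_le_prod (fun j _ => norm_nonneg _) (fun j _ => hQbound t ht j)
  refine ⟨fun t => t^m * ((∏ j, Q j t) / D t), ?_, ?_, ?_⟩
  · apply DifferentiableOn.mul
    · exact (differentiable_pow m).differentiableOn
    · apply DifferentiableOn.div
      · apply Differentiable.differentiableOn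
        apply diff_finset_prod
        intro j _
        simp only [hQdef]
        apply Differentiable.const_mul
        apply Differentiable.div_const
        apply diff_finset_prod
        intro k _
        exact ((differentiable_const _).sub (differentiable_id.mul
          (differentiable_const _))).sub (differentiable_const _)
      · apply Differentiable.differentiableOn
        apply diff_finset_prod
        intro j _
        exact differentiable_id.sub (differentiable_const _)
      · exact hDne
  · intro t ht hne
    have hD := hDne t ht
    rw [hGfun t, hnum t, hden t]
    have hq'eq : q' = m + q := by omega
    rw [hq'eq, pow_add]
    field_simp
  · intro t ht
    have h1 := hAbound t ht
    have h2 := hDlow t ht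
    have hpow : (0:ℝ) < δ^(n+1) := pow_pos hδpos _
    have hrw : ((q' : ℝ) - (q : ℝ)) = (m : ℝ) := by
      rw [hm]
      push_cast [Nat.cast_sub hqle]
      ring
    rw [hrw, Real.rpow_natCast]
    rw [norm_mul, norm_pow]
    have h3 : ‖(∏ j, Q j t) / D t‖ ≤ Cnum / δ^(n+1) := by
      rw [norm_div]
      exact div_le_div₀ (le_of_lt hCnumpos) h1 hpow h2
    calc ‖t‖ ^ m * ‖(∏ j, Q j t) / D t‖
        ≤ ‖t‖ ^ m * (Cnum / δ^(n+1)) :=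
          mul_le_mul_of_nonneg_left h3 (by positivity)
      _ = Cnum / δ^(n+1) * ‖t‖ ^ m := mul_comm _ _
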